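/- Let A = M₂(ℂ) ⊕ M₂(ℂ) and let D ≅ ℂ⊕ℂ⊕ℂ be the unital C*-subalgebra of A consisting of elements diag(a,b) ⊕ diag(b,c) for a,b,c ∈ ℂ. Let F : A → D be the conditional expectation sending (a_{ij}) ⊕ (b_{ij}) to the element of D with parameters (a₁₁, (a₂₂+b₁₁)/2, b₂₂), and let ρ be the state on D given by ρ(a,b,c) = a. Then the kernel of the GNS representation π_{ρ∘F} of A equals 0 ⊕ M₂(ℂ), and the element x = 0 ⊕ diag(2,0) lies in ker π_{ρ∘F} while F(x) = diag(0,1) ⊕ diag(1,0) does not; in particular, the inequality ‖π_{ρ∘F}(F(x))‖ ≤ ‖π_{ρ∘F}(x)‖ fails. -/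

import Mathlib

open scoped ComplexOrder InnerProductSpace

noncomputable section

namespace QSSPaper

/-- Ordered product of a finite sequence in a monoid. -/
def seqProd {M : Type*} [Monoid M] {n : ℕ} (f : Fin n → M) : M := (List.ofFn f).prod

section CStar

variable {B : Type*}

/-- A state on a unital C*-algebra, as a plain function with the defining properties. -/
def IsStateFun [CStarAlgebra B] (φ : B → ℂ) : Prop :=
  φ 1 = 1 ∧ (∀ x y, φ (x + y) = φ x + φ y) ∧ (∀ (c : ℂ) (x : B), φ (c • x) = c * φ x) ∧
    ∀ x, 0 ≤ φ (star x * x)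

/-- A state on a subset `D` (thought of as a unital C*-subalgebra). -/
def IsStateOn [CStarAlgebra B] (D : Set B) (φ : B → ℂ) : Prop :=
  φ 1 = 1 ∧ (∀ x ∈ D, ∀ y ∈ D, φ (x + y) = φ x + φ y) ∧
    (∀ (c : ℂ), ∀ x ∈ D, φ (c • x) = c * φ x) ∧ ∀ x ∈ D, 0 ≤ φ (star x * x)

/-- Traciality of a functional on a subset. -/
def IsTracialOn [Mul B] (D : Set B) (φ : B → ℂ) : Prop :=
  ∀ x ∈ D, ∀ y ∈ D, φ (x * y) = φ (y * x)

/-- `φ` is a pure state on the subalgebra `D`. -/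
def IsPureOn [CStarAlgebra B] (D : Set B) (φ : B → ℂ) : Prop :=
  IsStateOn D φ ∧ ∀ φ₁ φ₂ : B → ℂ, IsStateOn D φ₁ → IsStateOn D φ₂ →
    ∀ t : ℝ, 0 < t → t < 1 → (∀ x ∈ D, φ x = t * φ₁ x + (1 - t) * φ₂ x) →
      ∀ x ∈ D, φ₁ x = φ₂ x

/-- `E` is a conditional expectation (projection of norm one) from `R` onto `D`. -/
def IsCondExpOn [CStarAlgebra B] (R D : Set B) (E : B → B) : Prop :=
  D ⊆ R ∧ (∀ x ∈ R, E x ∈ D) ∧ (∀ x ∈ D, E x = x) ∧ (∀ x ∈ R, ‖E x‖ ≤ ‖x‖) ∧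
    (∀ x ∈ R, ∀ y ∈ R, E (x + y) = E x + E y) ∧ (∀ (c : ℂ), ∀ x ∈ R, E (c • x) = c • E x)

/-- Freeness of a family of subsets with respect to a conditional expectation `E`:
centered words with consecutively distinct letters have vanishing expectation. -/
def IsFreeFamily [Monoid B] [Zero B] {ι : Type*} (E : B → B) (S : ι → Set B) : Prop :=
  ∀ (n : ℕ) (i : Fin (n + 1) → ι) (b : Fin (n + 1) → B),
    (∀ t, b t ∈ S (i t)) → (∀ t, E (b t) = 0) →
    (∀ t : Fin n, i t.castSucc ≠ i t.succ) → E (seqProd b) = 0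

/-- The GNS representation of the conditional expectation `E` is faithful on `Y`. -/
def FaithfulCEGNS [Mul B] [Star B] [Zero B] (Y : Set B) (E : B → B) : Prop :=
  ∀ x ∈ Y, (∀ a ∈ Y, E (star (x * a) * (x * a)) = 0) → x = 0

/-- The GNS representation of the state `φ` is faithful on `Y`. -/
def FaithfulStateGNS [Mul B] [Star B] [Zero B] (Y : Set B) (φ : B → ℂ) : Prop :=
  ∀ x ∈ Y, (∀ a ∈ Y, φ (star (x * a) * (x * a)) = 0) → x = 0

/-- Extreme point of a convex set (in a real vector space). -/
def IsExtremeIn {X : Type*} [AddCommGroup X] [Module ℝ X] (s : Set X) (x : X) : Prop :=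
  x ∈ s ∧ ∀ y ∈ s, ∀ z ∈ s, ∀ t : ℝ, 0 < t → t < 1 → x = t • y + (1 - t) • z → y = x ∧ z = x

end CStar

section FreeProduct

variable {A Afr : Type*} [CStarAlgebra A] [CStarAlgebra Afr]

/-- The universal property of `Afr = ⋆_{i∈ℕ} A` with canonical maps `lam i`. -/
def IsUnivFreeProduct (lam : ℕ → A →⋆ₐ[ℂ] Afr) : Prop :=
  ∀ (B : Type) [CStarAlgebra B], ∀ p : ℕ → (A →⋆ₐ[ℂ] B),
    ∃! h : Afr →⋆ₐ[ℂ] B, ∀ i, h.comp (lam i) = p i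

/-- The state `ψ` on `Afr` is symmetric (exchangeable) for the copies `lam i`. -/
def IsSymmetricState (lam : ℕ → A →⋆ₐ[ℂ] Afr) (ψ : Afr → ℂ) : Prop :=
  ∀ (σ : Equiv.Perm ℕ) (n : ℕ) (i : Fin n → ℕ) (a : Fin n → A),
    ψ (seqProd fun t => lam (i t) (a t)) = ψ (seqProd fun t => lam (σ (i t)) (a t))

/-- A magic unitary (quantum permutation) of size `k` in a unital *-algebra. -/
def IsMagicUnitary {C : Type*} [Ring C] [StarRing C] {k : ℕ} (u : Fin k → Fin k → C) : Prop :=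
  (∀ i j, star (u i j) = u i j ∧ u i j * u i j = u i j) ∧
    (∀ j, ∑ i, u i j = 1) ∧ ∀ i, ∑ j, u i j = 1

/-- `ψ` is quantum symmetric: its joint moments are invariant under the action of all
quantum permutations, i.e. of all magic unitaries in all unital C*-algebras (equivalently,
under the coaction of Wang's quantum permutation groups `A_s(k)`). -/
def IsQuantumSymmetric (lam : ℕ → A →⋆ₐ[ℂ] Afr) (ψ : Afr → ℂ) : Prop :=
  ∀ (k : ℕ) (C : Type) [CStarAlgebra C],
    ∀ u : Fin k → Fin k → C, IsMagicUnitary u →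
      ∀ (n : ℕ) (i : Fin n → Fin k) (a : Fin n → A),
        ψ (seqProd fun t => lam (i t) (a t)) • (1 : C) =
          ∑ j : Fin n → Fin k,
            ψ (seqProd fun t => lam (j t) (a t)) • seqProd fun t => u (i t) (j t)

/-- The set of symmetric states on `Afr`. -/
def SSset (lam : ℕ → A →⋆ₐ[ℂ] Afr) : Set (Afr → ℂ) :=
  {ψ | IsStateFun ψ ∧ IsSymmetricState lam ψ}

/-- The set of quantum symmetric states on `Afr`. -/
def QSSset (lam : ℕ → A →⋆ₐ[ℂ] Afr) : Set (Afr → ℂ) :=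
  {ψ | IsStateFun ψ ∧ IsQuantumSymmetric lam ψ}

/-- The set of tracial quantum symmetric states on `Afr`. -/
def TQSSset (lam : ℕ → A →⋆ₐ[ℂ] Afr) : Set (Afr → ℂ) :=
  {ψ | ψ ∈ QSSset lam ∧ ∀ x y : Afr, ψ (x * y) = ψ (y * x)}

/-- `ψ` is the (reduced) free product state `⋆_1^∞ φ` on `Afr`: its marginals are `φ` and the
copies of `A` are free with respect to `ψ`. -/
def IsFreeProdState (lam : ℕ → A →⋆ₐ[ℂ] Afr) (φ : A → ℂ) (ψ : Afr → ℂ) : Prop :=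
  IsStateFun ψ ∧ (∀ (i : ℕ) (a : A), ψ (lam i a) = φ a) ∧
    ∀ (n : ℕ) (i : Fin (n + 1) → ℕ) (a : Fin (n + 1) → A),
      (∀ t : Fin n, i t.castSucc ≠ i t.succ) → (∀ t, φ (a t) = 0) →
        ψ (seqProd fun t => lam (i t) (a t)) = 0

end FreeProduct

section GNS

variable {A Afr : Type*} [CStarAlgebra A] [CStarAlgebra Afr]
variable {H : Type*} [NormedAddCommGroup H] [InnerProductSpace ℂ H] [CompleteSpace H]

/-- The vector state associated to a vector `ξ`. -/
def vecState (ξ : H) (x : H →L[ℂ] H) : ℂ := ⟪ξ, x ξ⟫_ℂ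

/-- `(H, π, ξ)` is a GNS triple for the state `φ`. -/
def IsGNSRep {B : Type*} [CStarAlgebra B] (φ : B → ℂ) (π : B →⋆ₐ[ℂ] (H →L[ℂ] H)) (ξ : H) :
    Prop :=
  (∀ a : B, φ a = ⟪ξ, π a ξ⟫_ℂ) ∧
    Dense ((Submodule.span ℂ (Set.range fun a : B => π a ξ) : Submodule ℂ H) : Set H)

/-- The von Neumann algebra generated by a (star-closed) set: its double commutant. -/
def vNgen (S : Set (H →L[ℂ] H)) : Set (H →L[ℂ] H) := Set.centralizer (Set.centralizer S)

/-- The C*-algebra generated by a set of operators. -/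
def cstarGen (S : Set (H →L[ℂ] H)) : Set (H →L[ℂ] H) :=
  closure ((StarAlgebra.adjoin ℂ S : StarSubalgebra ℂ (H →L[ℂ] H)) : Set (H →L[ℂ] H))

/-- The tail (von Neumann) algebra of the representations `π ∘ lam i`. -/
def tailAlg (lam : ℕ → A →⋆ₐ[ℂ] Afr) (π : Afr →⋆ₐ[ℂ] (H →L[ℂ] H)) : Set (H →L[ℂ] H) :=
  ⋂ N : ℕ, vNgen (⋃ i : ℕ, ⋃ _ : N ≤ i, Set.range fun a : A => π (lam i a))

/-- Conjugation of an operator by a unitary (linear isometric equivalence). -/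
def conjU (V : H ≃ₗᵢ[ℂ] H) (x : H →L[ℂ] H) : H →L[ℂ] H :=
  ((V.toContinuousLinearEquiv : H →L[ℂ] H).comp x).comp
    (V.symm.toContinuousLinearEquiv : H →L[ℂ] H)

/-- `U` is the family of unitaries implementing the permutation action on the GNS space:
it fixes the cyclic vector and conjugation permutes the copies of `A`. -/
def ImplementsPerms (lam : ℕ → A →⋆ₐ[ℂ] Afr) (π : Afr →⋆ₐ[ℂ] (H →L[ℂ] H))
    (U : Equiv.Perm ℕ → (H ≃ₗᵢ[ℂ] H)) (ξ : H) : Prop :=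
  (∀ σ, U σ ξ = ξ) ∧ ∀ (σ : Equiv.Perm ℕ) (i : ℕ) (a : A),
    conjU (U σ) (π (lam i a)) = π (lam (σ i) a)

/-- The fixed-point algebra of the permutation action on `M_ψ = π(Afr)''`. -/
def fixAlg (π : Afr →⋆ₐ[ℂ] (H →L[ℂ] H)) (U : Equiv.Perm ℕ → (H ≃ₗᵢ[ℂ] H)) :
    Set (H →L[ℂ] H) :=
  {x | x ∈ vNgen (Set.range fun y : Afr => π y) ∧ ∀ σ, conjU (U σ) x = x}

/-- Convergence in the weak operator topology along a filter. -/
def WOTtendsto {ι : Type*} (x : ι → (H →L[ℂ] H)) (l : Filter ι) (y : H →L[ℂ] H) : Prop :=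
  ∀ ζ η : H, Filter.Tendsto (fun n => ⟪ζ, x n η⟫_ℂ) l (nhds ⟪ζ, y η⟫_ℂ)

/-- `alpha` is the shift *-endomorphism of the C*-algebra `R` (generated by `D` and `π(Afr)`):
it shifts the copies of `A`, fixes `D` pointwise, and is an isometric unital
*-homomorphism on `R`. -/
def IsShift (lam : ℕ → A →⋆ₐ[ℂ] Afr) (π : Afr →⋆ₐ[ℂ] (H →L[ℂ] H))
    (R D : Set (H →L[ℂ] H)) (alpha : (H →L[ℂ] H) → (H →L[ℂ] H)) : Prop :=
  (∀ x ∈ R, alpha x ∈ R) ∧ (∀ (i : ℕ) (a : A), alpha (π (lam i a)) = π (lam (i + 1) a)) ∧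
    (∀ x ∈ D, alpha x = x) ∧
    (∀ x ∈ R, ∀ y ∈ R, alpha (x + y) = alpha x + alpha y) ∧
    (∀ x ∈ R, ∀ y ∈ R, alpha (x * y) = alpha x * alpha y) ∧
    (∀ (c : ℂ), ∀ x ∈ R, alpha (c • x) = c • alpha x) ∧
    (∀ x ∈ R, alpha (star x) = star (alpha x)) ∧ ∀ x ∈ R, ‖alpha x‖ = ‖x‖

/-- `E` is the canonical conditional expectation from `R` onto `D` obtained as the
weak-operator limit of the powers of a shift endomorphism. -/
def IsCanonicalCE (lam : ℕ → A →⋆ₐ[ℂ] Afr) (π : Afr →⋆ₐ[ℂ] (H →L[ℂ] H))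
    (R D : Set (H →L[ℂ] H)) (E : (H →L[ℂ] H) → (H →L[ℂ] H)) : Prop :=
  IsCondExpOn R D E ∧ ∃ alpha, IsShift lam π R D alpha ∧
    ∀ x ∈ R, WOTtendsto (fun n => alpha^[n] x) Filter.atTop (E x)

/-- Normality (σ-weak continuity) of a map on `M`: continuity for the weak operator
topology along bounded nets. -/
def NormalOn {K : Type*} [NormedAddCommGroup K] [InnerProductSpace ℂ K] [CompleteSpace K]
    (M : Set (H →L[ℂ] H)) (E : (H →L[ℂ] H) → (K →L[ℂ] K)) : Prop :=
  ∀ (ι : Type) (l : Filter ι) (x : ι → (H →L[ℂ] H)) (y : H →L[ℂ] H) (c : ℝ),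
    (∀ n, x n ∈ M) → y ∈ M → (∀ n, ‖x n‖ ≤ c) → WOTtendsto x l y →
      WOTtendsto (fun n => E (x n)) l (E y)

/-- Normality (σ-weak continuity) of a functional on `M`. -/
def NormalFnOn (M : Set (H →L[ℂ] H)) (φ : (H →L[ℂ] H) → ℂ) : Prop :=
  ∀ (ι : Type) (l : Filter ι) (x : ι → (H →L[ℂ] H)) (y : H →L[ℂ] H) (c : ℝ),
    (∀ n, x n ∈ M) → y ∈ M → (∀ n, ‖x n‖ ≤ c) → WOTtendsto x l y →
      Filter.Tendsto (fun n => φ (x n)) l (nhds (φ y))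

/-- The alternating product `π_{i₀}(a₀) x₀ π_{i₁}(a₁) x₁ ⋯ x_{n-1} π_{iₙ}(aₙ)`. -/
def interProd (lam : ℕ → A →⋆ₐ[ℂ] Afr) (π : Afr →⋆ₐ[ℂ] (H →L[ℂ] H)) {n : ℕ}
    (i : Fin (n + 1) → ℕ) (a : Fin (n + 1) → A) (x : Fin n → (H →L[ℂ] H)) : H →L[ℂ] H :=
  (seqProd fun t : Fin n => π (lam (i t.castSucc) (a t.castSucc)) * x t) *
    π (lam (i (Fin.last n)) (a (Fin.last n)))

/-- A closed unital *-subalgebra of the tail algebra `T` which is stable under taking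
`E`-expectations of alternating words. -/
def IsTailLike (lam : ℕ → A →⋆ₐ[ℂ] Afr) (π : Afr →⋆ₐ[ℂ] (H →L[ℂ] H))
    (T : Set (H →L[ℂ] H)) (E : (H →L[ℂ] H) → (H →L[ℂ] H)) (Z : Set (H →L[ℂ] H)) : Prop :=
  (1 : H →L[ℂ] H) ∈ Z ∧ Z ⊆ T ∧ IsClosed Z ∧
    (∀ x ∈ Z, ∀ y ∈ Z, x + y ∈ Z ∧ x * y ∈ Z) ∧ (∀ (c : ℂ), ∀ x ∈ Z, c • x ∈ Z) ∧
    (∀ x ∈ Z, star x ∈ Z) ∧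
    ∀ (n : ℕ) (i : Fin (n + 1) → ℕ) (a : Fin (n + 1) → A) (x : Fin n → (H →L[ℂ] H)),
      (∀ t, x t ∈ Z) → E (interProd lam π i a x) ∈ Z

/-- The tail C*-algebra: the smallest tail-like subalgebra. -/
def tailCStar (lam : ℕ → A →⋆ₐ[ℂ] Afr) (π : Afr →⋆ₐ[ℂ] (H →L[ℂ] H))
    (T : Set (H →L[ℂ] H)) (E : (H →L[ℂ] H) → (H →L[ℂ] H)) : Set (H →L[ℂ] H) :=
  ⋂₀ {Z | IsTailLike lam π T E Z}

end GNS


/-- A GNS triple for a linear functional on a unital *-algebra: `ξ` is a cyclic vector and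
the functional is the corresponding vector state. -/
def IsGNSRepAlg {B H : Type} [Ring B] [Algebra ℂ B] [StarRing B]
    [NormedAddCommGroup H] [InnerProductSpace ℂ H] [CompleteSpace H]
    (φ : B → ℂ) (π : B →⋆ₐ[ℂ] (H →L[ℂ] H)) (ξ : H) : Prop :=
  (∀ a : B, φ a = ⟪ξ, π a ξ⟫_ℂ) ∧
    Dense ((Submodule.span ℂ (Set.range fun a : B => π a ξ) : Submodule ℂ H) : Set H)

lemma sum2_conj_eq_zero {c0 c1 : ℂ}
    (h : (starRingEnd ℂ) c0 * c0 + (starRingEnd ℂ) c1 * c1 = 0) : c0 = 0 ∧ c1 = 0 := by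
  rw [← Complex.normSq_eq_conj_mul_self, ← Complex.normSq_eq_conj_mul_self] at h
  have h' : Complex.normSq c0 + Complex.normSq c1 = 0 := by exact_mod_cast h
  have h0 : Complex.normSq c0 = 0 ∧ Complex.normSq c1 = 0 := by
    constructor <;> nlinarith [Complex.normSq_nonneg c0, Complex.normSq_nonneg c1]
  exact ⟨Complex.normSq_eq_zero.1 h0.1, Complex.normSq_eq_zero.1 h0.2⟩

/-- the remark after Proposition `prop:TinW*D`.
Let `A = M₂(ℂ) ⊕ M₂(ℂ)`, let `D ≅ ℂ ⊕ ℂ ⊕ ℂ` be the subalgebra of elements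
`diag(a,b) ⊕ diag(b,c)`, let `F : A → D` be the conditional expectation with parameters
`(a₁₁, (a₂₂ + b₁₁)/2, b₂₂)` and `ρ(a,b,c) = a`.  Then the kernel of the GNS representation
of `ρ ∘ F` is `0 ⊕ M₂(ℂ)`; the element `x = 0 ⊕ diag(2,0)` lies in the kernel while
`F x = diag(0,1) ⊕ diag(1,0)` does not; in particular `‖π(F x)‖ ≤ ‖π x‖` fails. -/
theorem statement_3 {H : Type}
    [NormedAddCommGroup H] [InnerProductSpace ℂ H] [CompleteSpace H]
    (F : Matrix (Fin 2) (Fin 2) ℂ × Matrix (Fin 2) (Fin 2) ℂ →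
      Matrix (Fin 2) (Fin 2) ℂ × Matrix (Fin 2) (Fin 2) ℂ)
    (hF : F = fun p =>
      (Matrix.diagonal ![p.1 0 0, (p.1 1 1 + p.2 0 0) / 2],
       Matrix.diagonal ![(p.1 1 1 + p.2 0 0) / 2, p.2 1 1]))
    (ρ : Matrix (Fin 2) (Fin 2) ℂ × Matrix (Fin 2) (Fin 2) ℂ → ℂ)
    (hρ : ρ = fun p => p.1 0 0)
    (π : (Matrix (Fin 2) (Fin 2) ℂ × Matrix (Fin 2) (Fin 2) ℂ) →⋆ₐ[ℂ] (H →L[ℂ] H)) (ξ : H)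
    (hGNS : IsGNSRepAlg (fun p => ρ (F p)) π ξ) :
    {p : Matrix (Fin 2) (Fin 2) ℂ × Matrix (Fin 2) (Fin 2) ℂ | π p = 0}
        = {p | p.1 = 0} ∧
      π (0, Matrix.diagonal ![2, 0]) = 0 ∧
      F (0, Matrix.diagonal ![2, 0]) = (Matrix.diagonal ![0, 1], Matrix.diagonal ![1, 0]) ∧
      π (F (0, Matrix.diagonal ![2, 0])) ≠ 0 ∧
      ¬ ‖π (F (0, Matrix.diagonal ![2, 0]))‖ ≤ ‖π (0, Matrix.diagonal ![2, 0])‖ := by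

  obtain ⟨hrep, hdense⟩ := hGNS
  have hχ : ∀ p : Matrix (Fin 2) (Fin 2) ℂ × Matrix (Fin 2) (Fin 2) ℂ,
      ρ (F p) = p.1 0 0 := by subst hρ hF; intro p; simp
  -- key norm identity
  have hnorm : ∀ q : Matrix (Fin 2) (Fin 2) ℂ × Matrix (Fin 2) (Fin 2) ℂ,
      ⟪π q ξ, π q ξ⟫_ℂ = (star q * q).1 0 0 := by
    intro q
    have h1 : ρ (F (star q * q)) = ⟪ξ, π (star q * q) ξ⟫_ℂ := hrep (star q * q)
    rw [hχ] at h1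
    rw [map_mul, map_star, ContinuousLinearMap.star_eq_adjoint,
      ContinuousLinearMap.mul_apply, ContinuousLinearMap.adjoint_inner_right] at h1
    exact h1.symm
  -- first-component zero implies vector vanishes
  have hsub : ∀ q : Matrix (Fin 2) (Fin 2) ℂ × Matrix (Fin 2) (Fin 2) ℂ,
      q.1 = 0 → π q ξ = 0 := by
    intro q hq
    rw [← inner_self_eq_zero (𝕜 := ℂ), hnorm]
    simp [Prod.fst_mul, hq]
  -- kernel characterization
  have hker : {p : Matrix (Fin 2) (Fin 2) ℂ × Matrix (Fin 2) (Fin 2) ℂ | π p = 0}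
      = {p | p.1 = 0} := by
    ext p
    simp only [Set.mem_setOf_eq]
    constructor
    · intro h
      have hz : ∀ b : Matrix (Fin 2) (Fin 2) ℂ, ∀ k, (p.1 * b) k 0 = 0 := by
        intro b k
        have h2 : ⟪π (p * (b, 0)) ξ, π (p * (b, 0)) ξ⟫_ℂ = 0 := by
          rw [map_mul, h, zero_mul]; simp
        rw [hnorm] at h2
        have h3 : ((star (p.1 * b)) * (p.1 * b)) 0 0 = 0 := by
          simpa [Prod.mul_def] using h2
        rw [Matrix.mul_apply] at h3
        simp only [Matrix.star_apply, Fin.sum_univ_two] at h3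
        have h4 := sum2_conj_eq_zero h3
        fin_cases k
        · exact h4.1
        · exact h4.2
      ext i j
      fin_cases j
      · have := hz 1 i; simpa using this
      · have := hz (Matrix.single 1 0 1) i
        rw [Matrix.mul_apply] at this
        simpa [Matrix.single, Fin.sum_univ_two] using this
    · intro h
      have hle : Submodule.span ℂ (Set.range fun a :
            Matrix (Fin 2) (Fin 2) ℂ × Matrix (Fin 2) (Fin 2) ℂ => π a ξ)
          ≤ LinearMap.ker (π p : H →ₗ[ℂ] H) := by
        rw [Submodule.span_le]
        rintro _ ⟨a, rfl⟩
        have : π p (π a ξ) = π (p * a) ξ := by rw [map_mul]; rfl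
        have : π p (π a ξ) = 0 := by
          rw [this]; exact hsub _ (by simp [Prod.fst_mul, h])
        simpa using this
      ext v
      have hv : v ∈ closure ((Submodule.span ℂ (Set.range fun a :
          Matrix (Fin 2) (Fin 2) ℂ × Matrix (Fin 2) (Fin 2) ℂ => π a ξ) : Submodule ℂ H)
          : Set H) := hdense v
      have hclosed : IsClosed {w : H | π p w = 0} :=
        isClosed_singleton.preimage (π p).continuous
      have : v ∈ {w : H | π p w = 0} := by
        refine closure_minimal ?_ hclosed hv
        intro w hw
        exact hle hw
      simpa using this
  refine ⟨hker, ?_, ?_, ?_, ?_⟩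
  · have : ((0 : Matrix (Fin 2) (Fin 2) ℂ), Matrix.diagonal ![2, 0]) ∈
        {p : Matrix (Fin 2) (Fin 2) ℂ × Matrix (Fin 2) (Fin 2) ℂ | π p = 0} := by
      rw [hker]; exact rfl
    exact this
  · subst hF
    simp only
    rw [Prod.mk.injEq]
    constructor <;> · ext i j; fin_cases i <;> fin_cases j <;>
      simp [Matrix.diagonal]
  · intro hc
    have : F (0, Matrix.diagonal ![2, 0]) ∈
        {p : Matrix (Fin 2) (Fin 2) ℂ × Matrix (Fin 2) (Fin 2) ℂ | π p = 0} := hc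
    rw [hker] at this
    have h1 : (F (0, Matrix.diagonal ![2, 0])).1 1 1 = 0 := by rw [this]; simp
    rw [hF] at h1
    simp [Matrix.diagonal] at h1
  · intro hc
    have hx0 : π ((0 : Matrix (Fin 2) (Fin 2) ℂ), Matrix.diagonal ![2, 0]) = 0 := by
      have : ((0 : Matrix (Fin 2) (Fin 2) ℂ), Matrix.diagonal ![2, 0]) ∈
          {p : Matrix (Fin 2) (Fin 2) ℂ × Matrix (Fin 2) (Fin 2) ℂ | π p = 0} := by
        rw [hker]; exact rfl
      exact this
    rw [hx0, norm_zero] at hc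
    have hF0 : π (F (0, Matrix.diagonal ![2, 0])) = 0 := norm_le_zero_iff.1 hc
    -- contradiction with previous
    have : F (0, Matrix.diagonal ![2, 0]) ∈
        {p : Matrix (Fin 2) (Fin 2) ℂ × Matrix (Fin 2) (Fin 2) ℂ | π p = 0} := hF0
    rw [hker] at this
    have h1 : (F (0, Matrix.diagonal ![2, 0])).1 1 1 = 0 := by rw [this]; simp
    rw [hF] at h1
    simp [Matrix.diagonal] at h1
end QSSPaper
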